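/- Let Λ_θ be a family of linear maps on Hermitian matrices with Perron-Frobenius eigenvalue λ_θ, eigenvector ρ_θ of trace one, and adjoint eigenvector A_θ with A_θ ≥ I and A_θ - I not strictly positive definite. Let φ_{n,ρ}(θ) := log Tr Λ_θⁿ(ρ) for a state ρ. Then n·log λ_θ + log Tr(A_θ ρ) - log ‖A_θ‖ ≤ φ_{n,ρ}(θ) ≤ n·log λ_θ + log Tr(A_θ ρ). -/

import Mathlib

open scoped Matrix.Norms.L2Operator ComplexOrder
open Matrix

lemma psd_trace_re_nonneg {d : ℕ} {M : Matrix (Fin d) (Fin d) ℂ} (hM : M.PosSemidef) :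
    0 ≤ M.trace.re := by
  have h : ∀ i, 0 ≤ (M i i).re := fun i => by
    simpa [dotProduct, Matrix.mulVec, Pi.single_apply, Finset.sum_ite_eq,
      Finset.mul_sum] using hM.re_dotProduct_nonneg (Pi.single i 1)
  simp only [Matrix.trace, Matrix.diag, Complex.re_sum]
  exact Finset.sum_nonneg fun i _ => h i

open scoped MatrixOrder in
lemma psd_mul_trace_re_nonneg {d : ℕ} {B C : Matrix (Fin d) (Fin d) ℂ}
    (hB : B.PosSemidef) (hC : C.PosSemidef) : 0 ≤ ((B * C).trace).re := by
  have hps : (CFC.sqrt B * C * CFC.sqrt B).PosSemidef := by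
    have := hC.conjTranspose_mul_mul_same (CFC.sqrt B)
    rwa [(CFC.sqrt_nonneg B).posSemidef.isHermitian.eq] at this
  have h1 : (CFC.sqrt B * C * CFC.sqrt B).trace = (B * C).trace := by
    rw [Matrix.trace_mul_cycle, CFC.sqrt_mul_sqrt_self B hB.nonneg]
  rw [← h1]
  exact psd_trace_re_nonneg hps

lemma norm_smul_one_sub_psd {d : ℕ} {A : Matrix (Fin d) (Fin d) ℂ} (hA : A.IsHermitian) :
    (((‖A‖ : ℂ)) • (1 : Matrix (Fin d) (Fin d) ℂ) - A).PosSemidef := by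
  have hsymm := (Matrix.isHermitian_iff_isSymmetric).mp hA
  refine Matrix.PosSemidef.of_dotProduct_mulVec_nonneg ?_ ?_
  · simp [Matrix.IsHermitian, Matrix.conjTranspose_smul, Matrix.conjTranspose_sub, hA.eq,
      Complex.star_def, Complex.conj_ofReal]
  · intro x
    set x' : EuclideanSpace ℂ (Fin d) := (WithLp.equiv 2 (Fin d → ℂ)).symm x with hx'
    set q : ℂ := inner ℂ x' (Matrix.toEuclideanLin A x') with hqdef
    have hq : dotProduct (star x) (A *ᵥ x) = q := by
      rw [hqdef]
      exact dotProduct_comm _ _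
    have hx2 : dotProduct (star x) x = ((‖x'‖ ^ 2 : ℝ) : ℂ) := by
      rw [show dotProduct (star x) x = inner ℂ x' x' from dotProduct_comm _ _, inner_self_eq_norm_sq_to_K]
      push_cast
      rfl
    have him : q.im = 0 := by
      have hs := hsymm x' x'
      have hconj : (starRingEnd ℂ) q = q := by rw [hqdef, inner_conj_symm, hs]
      exact Complex.conj_eq_iff_im.mp hconj
    have hre : q.re ≤ ‖A‖ * ‖x'‖ ^ 2 := by
      calc q.re ≤ ‖q‖ := Complex.re_le_norm _
        _ = ‖q‖ := rfl
        _ ≤ ‖x'‖ * ‖Matrix.toEuclideanLin A x'‖ := norm_inner_le_norm _ _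
        _ ≤ ‖x'‖ * (‖A‖ * ‖x'‖) := by
            refine mul_le_mul_of_nonneg_left ?_ (norm_nonneg _)
            rw [hx']
            exact Matrix.l2_opNorm_mulVec A _
        _ = ‖A‖ * ‖x'‖ ^ 2 := by ring
    rw [Matrix.sub_mulVec, Matrix.smul_mulVec, Matrix.one_mulVec, dotProduct_sub,
      dotProduct_smul, hx2, hq, smul_eq_mul, ← Complex.ofReal_mul, Complex.nonneg_iff]
    constructor
    · rw [Complex.sub_re, Complex.ofReal_re]; linarith
    · rw [Complex.sub_im, Complex.ofReal_im, him]; ring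

theorem cgf_finite_evaluation
    {d : ℕ} (Λ : Module.End ℂ (Matrix (Fin d) (Fin d) ℂ))
    (hpos : ∀ X : Matrix (Fin d) (Fin d) ℂ, X.PosSemidef → (Λ X).PosSemidef)
    (lam : ℝ) (hlam : 0 < lam)
    (ρθ : Matrix (Fin d) (Fin d) ℂ) (hρθ : ρθ.PosDef) (hρθtr : ρθ.trace = 1)
    (hρθeig : Λ ρθ = (lam : ℂ) • ρθ)
    (A : Matrix (Fin d) (Fin d) ℂ) (hA : A.IsHermitian)
    -- A is an eigenvector of the adjoint map Λ* with eigenvalue lam: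
    (hAeig : ∀ X : Matrix (Fin d) (Fin d) ℂ, (A * Λ X).trace = (lam : ℂ) * (A * X).trace)
    -- A ≥ I but A - I is not strictly positive definite:
    (hAgeI : (A - 1).PosSemidef) (hAnot : ¬ (A - 1).PosDef)
    (ρ : Matrix (Fin d) (Fin d) ℂ) (hρ : ρ.PosSemidef) (hρtr : ρ.trace = 1)
    (n : ℕ) :
    (n : ℝ) * Real.log lam + Real.log ((A * ρ).trace.re) - Real.log ‖A‖
        ≤ Real.log (((Λ ^ n) ρ).trace.re) ∧
    Real.log (((Λ ^ n) ρ).trace.re)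
        ≤ (n : ℝ) * Real.log lam + Real.log ((A * ρ).trace.re) := by
  -- lower bound on traces against A
  have hlb : ∀ S : Matrix (Fin d) (Fin d) ℂ, S.PosSemidef →
      S.trace.re ≤ (A * S).trace.re := by
    intro S hS
    have h := psd_mul_trace_re_nonneg hAgeI hS
    have he : ((A - 1) * S).trace = (A * S).trace - S.trace := by
      rw [Matrix.sub_mul, Matrix.one_mul, Matrix.trace_sub]
    rw [he, Complex.sub_re] at h
    linarith
  -- upper bound on traces against A
  have hub : ∀ S : Matrix (Fin d) (Fin d) ℂ, S.PosSemidef →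
      (A * S).trace.re ≤ ‖A‖ * S.trace.re := by
    intro S hS
    have h := psd_mul_trace_re_nonneg (norm_smul_one_sub_psd hA) hS
    have he : (((‖A‖ : ℂ) • 1 - A) * S).trace = (‖A‖ : ℂ) * S.trace - (A * S).trace := by
      rw [Matrix.sub_mul, Matrix.smul_mul, Matrix.one_mul, Matrix.trace_sub, Matrix.trace_smul]
      rw [smul_eq_mul]
    rw [he, Complex.sub_re, Complex.re_ofReal_mul] at h
    linarith
  have hρre : ρ.trace.re = 1 := by rw [hρtr]; simp
  set a : ℝ := (A * ρ).trace.re with hadef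
  have ha1 : 1 ≤ a := by have := hlb ρ hρ; rw [hρre] at this; exact this
  have hapos : 0 < a := lt_of_lt_of_le one_pos ha1
  have hAnorm : 1 ≤ ‖A‖ := by
    have := hub ρ hρ; rw [hρre, mul_one] at this; linarith
  have hAn0 : 0 < ‖A‖ := lt_of_lt_of_le one_pos hAnorm
  -- PSD of iterates
  have hSn : ∀ m : ℕ, ((Λ ^ m) ρ).PosSemidef := by
    intro m
    induction m with
    | zero => simpa using hρ
    | succ k ih =>
      rw [pow_succ']
      exact hpos _ ih
  -- key trace identity
  have key : ∀ m : ℕ, (A * ((Λ ^ m) ρ)).trace = ((lam : ℂ)) ^ m * (A * ρ).trace := by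
    intro m
    induction m with
    | zero => simp
    | succ k ih =>
      rw [pow_succ', Module.End.mul_apply, hAeig, ih, pow_succ]
      ring
  have keyre : (A * ((Λ ^ n) ρ)).trace.re = lam ^ n * a := by
    rw [key n, ← Complex.ofReal_pow, Complex.re_ofReal_mul]
  set t : ℝ := ((Λ ^ n) ρ).trace.re with htdef
  have h1 : t ≤ lam ^ n * a := by
    have := hlb _ (hSn n); rw [keyre] at this; exact this
  have h2 : lam ^ n * a ≤ ‖A‖ * t := by
    have := hub _ (hSn n); rw [keyre] at this; exact this
  have hlampow : 0 < lam ^ n := pow_pos hlam n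
  have hprod : 0 < lam ^ n * a := mul_pos hlampow hapos
  have ht : 0 < t := by nlinarith
  constructor
  · have hle : lam ^ n * a / ‖A‖ ≤ t := by
      rw [div_le_iff₀ hAn0]; linarith [h2, mul_comm t ‖A‖]
    have hlog := Real.log_le_log (by positivity) hle
    rw [Real.log_div (ne_of_gt hprod) (ne_of_gt hAn0),
      Real.log_mul (ne_of_gt hlampow) (ne_of_gt hapos), Real.log_pow] at hlog
    exact hlog
  · have hlog := Real.log_le_log ht h1
    rw [Real.log_mul (ne_of_gt hlampow) (ne_of_gt hapos), Real.log_pow] at hlog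
    exact hlog
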